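/- Let Π be a convex set of stochastic policies, ν a probability distribution on states, and ε ≥ 0. Assume Π contains all deterministic policies and that π ∈ Π is an ε-local optimum of J_ν over Π, i.e., for all π'' ∈ Π, lim_{α→0}(J_ν((1-α)π+απ'') - J_ν(π))/α ≤ ε. Then for EVERY stochastic policy π' (not only the optimal one) and every probability distribution μ on states, μ·v_{π'} ≤ μ·v_π + (1-γ)^{-1} · ‖d_{μ,π'}/ν‖_∞ · (E_ν(Π)/(1-γ) + ε), where ‖d_{μ,π'}/ν‖_∞ is the smallest C with d_{μ,π'}(s) ≤ C ν(s) for all s (assumed finite) and E_ν(Π) = max_{ρ∈Π} min_{ρ'∈Π} d_{ν,ρ}·(T v_ρ - T_{ρ'} v_ρ). -/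

import Mathlib

open Matrix Filter Topology

section MDPdefs

variable {S A : Type*}

/-- `P` is a transition kernel: nonnegative and each row sums to one. -/
def IsKernel [Fintype S] (P : S → A → S → ℝ) : Prop :=
  ∀ s a, (∀ s', 0 ≤ P s a s') ∧ ∑ s', P s a s' = 1

/-- A stochastic policy: a probability distribution over actions in each state. -/
def IsPolicy [Fintype A] (π : S → A → ℝ) : Prop :=
  ∀ s, (∀ a, 0 ≤ π s a) ∧ ∑ a, π s a = 1

/-- A probability distribution over states. -/
def IsDist [Fintype S] (μ : S → ℝ) : Prop :=
  (∀ s, 0 ≤ μ s) ∧ ∑ s, μ s = 1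

/-- The reward vector `r_π(s) = ∑_a π(a|s) r(s,a)`. -/
def rPol [Fintype A] (r : S → A → ℝ) (π : S → A → ℝ) : S → ℝ :=
  fun s => ∑ a, π s a * r s a

/-- The stochastic matrix `P_π(s,s') = ∑_a π(a|s) P(s'|s,a)`. -/
def PPol [Fintype A] (P : S → A → S → ℝ) (π : S → A → ℝ) : Matrix S S ℝ :=
  Matrix.of fun s s' => ∑ a, π s a * P s a s'

/-- The Bellman operator `T_π v = r_π + γ P_π v`. -/
noncomputable def bellman [Fintype S] [Fintype A] (P : S → A → S → ℝ) (r : S → A → ℝ)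
    (γ : ℝ) (π : S → A → ℝ) (v : S → ℝ) : S → ℝ :=
  rPol r π + γ • (PPol P π *ᵥ v)

/-- The optimal Bellman operator `(Tv)(s) = max_a [r(s,a) + γ ∑_{s'} P(s'|s,a) v(s')]`. -/
noncomputable def optBellman [Fintype S] [Fintype A] [Nonempty A] (P : S → A → S → ℝ)
    (r : S → A → ℝ) (γ : ℝ) (v : S → ℝ) : S → ℝ :=
  fun s => Finset.univ.sup' Finset.univ_nonempty fun a => r s a + γ * ∑ s', P s a s' * v s'

/-- The value function of policy `π`, `v_π = (I - γ P_π)⁻¹ r_π`, the unique solution of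
`v = r_π + γ P_π v` when `0 ≤ γ < 1`. -/
noncomputable def valueFn [Fintype S] [Fintype A] [DecidableEq S] (P : S → A → S → ℝ)
    (r : S → A → ℝ) (γ : ℝ) (π : S → A → ℝ) : S → ℝ :=
  ((1 : Matrix S S ℝ) - γ • PPol P π)⁻¹ *ᵥ rPol r π

/-- The γ-weighted occupancy measure `d_{μ,π} = (1-γ) μ (I - γ P_π)⁻¹` (a row vector). -/
noncomputable def occ [Fintype S] [Fintype A] [DecidableEq S] (P : S → A → S → ℝ)
    (γ : ℝ) (μ : S → ℝ) (π : S → A → ℝ) : S → ℝ :=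
  (1 - γ) • (μ ᵥ* ((1 : Matrix S S ℝ) - γ • PPol P π)⁻¹)

/-- The stochastic mixture `(1-α)π + απ'`. -/
def mix (α : ℝ) (π π' : S → A → ℝ) : S → A → ℝ :=
  fun s a => (1 - α) * π s a + α * π' s a

/-- The `ν`-greedy-complexity `E_ν(Π) = sup_{ρ∈Π} inf_{ρ'∈Π} d_{ν,ρ}·(T v_ρ - T_{ρ'} v_ρ)`. -/
noncomputable def greedyCplx [Fintype S] [Fintype A] [Nonempty A] [DecidableEq S]
    (P : S → A → S → ℝ) (r : S → A → ℝ) (γ : ℝ) (ν : S → ℝ)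
    (Pol : Set (S → A → ℝ)) : ℝ :=
  ⨆ ρ : Pol, ⨅ ρ' : Pol,
    occ P γ ν (ρ : S → A → ℝ) ⬝ᵥ
      (optBellman P r γ (valueFn P r γ (ρ : S → A → ℝ)) -
        bellman P r γ (ρ' : S → A → ℝ) (valueFn P r γ (ρ : S → A → ℝ)))

/-- `π` is an `ε`-local optimum of `J_ν` over `Pol`: for every `π' ∈ Pol`, the (one-sided)
limit of `(ν·v_{(1-α)π+απ'} - ν·v_π)/α` as `α → 0⁺` exists and is at most `ε`. -/
def IsLocalOpt [Fintype S] [Fintype A] [DecidableEq S]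
    (P : S → A → S → ℝ) (r : S → A → ℝ) (γ : ℝ) (ν : S → ℝ)
    (Pol : Set (S → A → ℝ)) (π : S → A → ℝ) (ε : ℝ) : Prop :=
  ∀ π' ∈ Pol, ∃ L ≤ ε,
    Tendsto (fun α : ℝ =>
        (ν ⬝ᵥ valueFn P r γ (mix α π π') - ν ⬝ᵥ valueFn P r γ π) / α)
      (𝓝[>] 0) (𝓝 L)

end MDPdefs

section AuxProof

set_option linter.unusedSectionVars false

variable {S A : Type*} [Fintype S] [Fintype A] [Nonempty S] [Nonempty A] [DecidableEq S]
variable {P : S → A → S → ℝ} {r : S → A → ℝ} {γ : ℝ} {ρ σ : S → A → ℝ}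

lemma PPol_nonneg (hP : IsKernel P) (hρ : IsPolicy ρ) (s s' : S) : 0 ≤ PPol P ρ s s' :=
  Finset.sum_nonneg fun a _ => mul_nonneg ((hρ s).1 a) ((hP s a).1 s')

lemma PPol_rowsum (hP : IsKernel P) (hρ : IsPolicy ρ) (s : S) : ∑ s', PPol P ρ s s' = 1 := by
  show ∑ s', ∑ a, ρ s a * P s a s' = 1
  rw [Finset.sum_comm]
  calc ∑ a, ∑ s', ρ s a * P s a s' = ∑ a, ρ s a * ∑ s', P s a s' := by
        simp [Finset.mul_sum]
    _ = ∑ a, ρ s a := Finset.sum_congr rfl fun a _ => by rw [(hP s a).2, mul_one]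
    _ = 1 := (hρ s).2

lemma nonneg_of_mulVec_nonneg (hγ0 : 0 ≤ γ) (hγ1 : γ < 1) (hP : IsKernel P) (hρ : IsPolicy ρ)
    {y : S → ℝ} (h : ∀ s, 0 ≤ (((1 : Matrix S S ℝ) - γ • PPol P ρ) *ᵥ y) s) :
    ∀ s, 0 ≤ y s := by
  obtain ⟨s0, -, hmin⟩ := Finset.exists_min_image Finset.univ y Finset.univ_nonempty
  have hBy : γ * y s0 ≤ γ * ((PPol P ρ) *ᵥ y) s0 := by
    apply mul_le_mul_of_nonneg_left _ hγ0
    calc y s0 = ∑ s', PPol P ρ s0 s' * y s0 := by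
          rw [← Finset.sum_mul, PPol_rowsum hP hρ, one_mul]
      _ ≤ ∑ s', PPol P ρ s0 s' * y s' :=
        Finset.sum_le_sum fun s' _ =>
          mul_le_mul_of_nonneg_left (hmin s' (Finset.mem_univ s')) (PPol_nonneg hP hρ _ _)
      _ = ((PPol P ρ) *ᵥ y) s0 := rfl
  have h0 := h s0
  rw [Matrix.sub_mulVec, Matrix.one_mulVec, Matrix.smul_mulVec] at h0
  simp only [Pi.sub_apply, Pi.smul_apply, smul_eq_mul] at h0
  have hy0 : 0 ≤ y s0 := by nlinarith
  exact fun s => le_trans hy0 (hmin s (Finset.mem_univ s))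

lemma isUnit_det_aux (hγ0 : 0 ≤ γ) (hγ1 : γ < 1) (hP : IsKernel P) (hρ : IsPolicy ρ) :
    IsUnit ((1 : Matrix S S ℝ) - γ • PPol P ρ).det := by
  rw [isUnit_iff_ne_zero]
  intro hdet
  obtain ⟨v, hv0, hv⟩ := (Matrix.exists_mulVec_eq_zero_iff).mpr hdet
  have h1 : ∀ s, 0 ≤ v s :=
    nonneg_of_mulVec_nonneg hγ0 hγ1 hP hρ (by rw [hv]; exact fun s => le_refl 0)
  have h2 : ∀ s, 0 ≤ (-v) s :=
    nonneg_of_mulVec_nonneg hγ0 hγ1 hP hρ (by rw [Matrix.mulVec_neg, hv]; simp)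
  exact hv0 (funext fun s => le_antisymm (by simpa using h2 s) (h1 s))

lemma inv_mulVec_eq (hγ0 : 0 ≤ γ) (hγ1 : γ < 1) (hP : IsKernel P) (hρ : IsPolicy ρ)
    {x y : S → ℝ} (h : ((1 : Matrix S S ℝ) - γ • PPol P ρ) *ᵥ y = x) :
    ((1 : Matrix S S ℝ) - γ • PPol P ρ)⁻¹ *ᵥ x = y := by
  rw [← h, Matrix.mulVec_mulVec, Matrix.nonsing_inv_mul _ (isUnit_det_aux hγ0 hγ1 hP hρ),
    Matrix.one_mulVec]

lemma inv_mulVec_nonneg (hγ0 : 0 ≤ γ) (hγ1 : γ < 1) (hP : IsKernel P) (hρ : IsPolicy ρ)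
    {x : S → ℝ} (hx : ∀ t, 0 ≤ x t) (t : S) :
    0 ≤ (((1 : Matrix S S ℝ) - γ • PPol P ρ)⁻¹ *ᵥ x) t := by
  refine nonneg_of_mulVec_nonneg hγ0 hγ1 hP hρ ?_ t
  rw [Matrix.mulVec_mulVec, Matrix.mul_nonsing_inv _ (isUnit_det_aux hγ0 hγ1 hP hρ),
    Matrix.one_mulVec]
  exact hx

lemma inv_entry_nonneg (hγ0 : 0 ≤ γ) (hγ1 : γ < 1) (hP : IsKernel P) (hρ : IsPolicy ρ)
    (s s' : S) : 0 ≤ ((1 : Matrix S S ℝ) - γ • PPol P ρ)⁻¹ s s' := by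
  have := inv_mulVec_nonneg hγ0 hγ1 hP hρ
    (x := Pi.single s' 1) (fun t => by
      rcases eq_or_ne t s' with h | h <;> simp [Pi.single_apply, h]) s
  rw [Matrix.mulVec_single] at this
  simpa using this

lemma one_le_inv_diag (hγ0 : 0 ≤ γ) (hγ1 : γ < 1) (hP : IsKernel P) (hρ : IsPolicy ρ)
    (s : S) : 1 ≤ ((1 : Matrix S S ℝ) - γ • PPol P ρ)⁻¹ s s := by
  have h := Matrix.nonsing_inv_mul _ (isUnit_det_aux hγ0 hγ1 hP hρ (P := P) (ρ := ρ))
  rw [Matrix.mul_sub, Matrix.mul_one, Matrix.mul_smul, sub_eq_iff_eq_add] at h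
  have hss : ((1 : Matrix S S ℝ) - γ • PPol P ρ)⁻¹ s s
      = 1 + γ * (((1 : Matrix S S ℝ) - γ • PPol P ρ)⁻¹ * PPol P ρ) s s := by
    conv_lhs => rw [h]
    simp [Matrix.add_apply, Matrix.smul_apply, Matrix.one_apply]
  rw [hss]
  have : 0 ≤ (((1 : Matrix S S ℝ) - γ • PPol P ρ)⁻¹ * PPol P ρ) s s :=
    Finset.sum_nonneg fun t _ =>
      mul_nonneg (inv_entry_nonneg hγ0 hγ1 hP hρ s t) (PPol_nonneg hP hρ t s)
  nlinarith

lemma inv_mulVec_one (hγ0 : 0 ≤ γ) (hγ1 : γ < 1) (hP : IsKernel P) (hρ : IsPolicy ρ) :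
    ((1 : Matrix S S ℝ) - γ • PPol P ρ)⁻¹ *ᵥ (fun _ => (1 : ℝ)) = fun _ => (1 - γ)⁻¹ := by
  apply inv_mulVec_eq hγ0 hγ1 hP hρ
  funext s
  rw [Matrix.sub_mulVec, Matrix.one_mulVec, Matrix.smul_mulVec]
  simp only [Pi.sub_apply, Pi.smul_apply, smul_eq_mul]
  have : ((PPol P ρ) *ᵥ fun _ => (1 - γ)⁻¹) s = (1 - γ)⁻¹ := by
    show ∑ s', PPol P ρ s s' * (1 - γ)⁻¹ = (1 - γ)⁻¹
    rw [← Finset.sum_mul, PPol_rowsum hP hρ, one_mul]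
  rw [this]
  have hne : (1 : ℝ) - γ ≠ 0 := by linarith
  field_simp

lemma inv_rowsum (hγ0 : 0 ≤ γ) (hγ1 : γ < 1) (hP : IsKernel P) (hρ : IsPolicy ρ) (s : S) :
    ∑ s', ((1 : Matrix S S ℝ) - γ • PPol P ρ)⁻¹ s s' = (1 - γ)⁻¹ := by
  have := congr_fun (inv_mulVec_one hγ0 hγ1 hP hρ (P := P) (ρ := ρ)) s
  simpa [Matrix.mulVec, dotProduct] using this

lemma bellman_valueFn (hγ0 : 0 ≤ γ) (hγ1 : γ < 1) (hP : IsKernel P) (hρ : IsPolicy ρ) :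
    bellman P r γ ρ (valueFn P r γ ρ) = valueFn P r γ ρ := by
  have hA : ((1 : Matrix S S ℝ) - γ • PPol P ρ) *ᵥ valueFn P r γ ρ = rPol r ρ := by
    unfold valueFn
    rw [Matrix.mulVec_mulVec, Matrix.mul_nonsing_inv _ (isUnit_det_aux hγ0 hγ1 hP hρ),
      Matrix.one_mulVec]
  rw [Matrix.sub_mulVec, Matrix.one_mulVec, Matrix.smul_mulVec] at hA
  unfold bellman
  rw [← hA]
  abel



lemma occ_nonneg (hγ0 : 0 ≤ γ) (hγ1 : γ < 1) (hP : IsKernel P) (hρ : IsPolicy ρ)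
    {ν : S → ℝ} (hν : ∀ t, 0 ≤ ν t) (s : S) : 0 ≤ occ P γ ν ρ s := by
  unfold occ
  simp only [Pi.smul_apply, smul_eq_mul]
  refine mul_nonneg (by linarith) ?_
  exact Finset.sum_nonneg fun t _ =>
    mul_nonneg (hν t) (inv_entry_nonneg hγ0 hγ1 hP hρ t s)

lemma occ_sum (hγ0 : 0 ≤ γ) (hγ1 : γ < 1) (hP : IsKernel P) (hρ : IsPolicy ρ)
    {ν : S → ℝ} (hν : IsDist ν) : ∑ s, occ P γ ν ρ s = 1 := by
  unfold occ
  simp only [Pi.smul_apply, smul_eq_mul]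
  rw [← Finset.mul_sum]
  have : ∑ s, (ν ᵥ* ((1 : Matrix S S ℝ) - γ • PPol P ρ)⁻¹) s
      = ∑ t, ν t * ∑ s, ((1 : Matrix S S ℝ) - γ • PPol P ρ)⁻¹ t s := by
    unfold Matrix.vecMul dotProduct
    rw [Finset.sum_comm]
    simp [Finset.mul_sum]
  rw [this]
  have hne : (1 : ℝ) - γ ≠ 0 := by linarith
  calc (1 - γ) * ∑ t, ν t * ∑ s, ((1 : Matrix S S ℝ) - γ • PPol P ρ)⁻¹ t s
      = (1 - γ) * ∑ t, ν t * (1 - γ)⁻¹ := by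
        rw [Finset.sum_congr rfl fun t _ => by rw [inv_rowsum hγ0 hγ1 hP hρ]]
    _ = 1 := by rw [← Finset.sum_mul, hν.2]; field_simp

lemma occ_ge (hγ0 : 0 ≤ γ) (hγ1 : γ < 1) (hP : IsKernel P) (hρ : IsPolicy ρ)
    {ν : S → ℝ} (hν : ∀ t, 0 ≤ ν t) (s : S) : (1 - γ) * ν s ≤ occ P γ ν ρ s := by
  unfold occ
  simp only [Pi.smul_apply, smul_eq_mul]
  refine mul_le_mul_of_nonneg_left ?_ (by linarith)
  calc ν s = ν s * 1 := (mul_one _).symm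
    _ ≤ ν s * ((1 : Matrix S S ℝ) - γ • PPol P ρ)⁻¹ s s :=
      mul_le_mul_of_nonneg_left (one_le_inv_diag hγ0 hγ1 hP hρ s) (hν s)
    _ ≤ ∑ t, ν t * ((1 : Matrix S S ℝ) - γ • PPol P ρ)⁻¹ t s := by
      refine Finset.single_le_sum
        (f := fun t => ν t * ((1 : Matrix S S ℝ) - γ • PPol P ρ)⁻¹ t s) ?_ (Finset.mem_univ s)
      exact fun t _ => mul_nonneg (hν t) (inv_entry_nonneg hγ0 hγ1 hP hρ t s)
    _ = (ν ᵥ* ((1 : Matrix S S ℝ) - γ • PPol P ρ)⁻¹) s := rfl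

lemma perf_diff (hγ0 : 0 ≤ γ) (hγ1 : γ < 1) (hP : IsKernel P)
    (hρ : IsPolicy ρ) (hσ : IsPolicy σ) (ν : S → ℝ) :
    ν ⬝ᵥ valueFn P r γ ρ - ν ⬝ᵥ valueFn P r γ σ
      = (1 - γ)⁻¹ *
        (occ P γ ν ρ ⬝ᵥ (bellman P r γ ρ (valueFn P r γ σ) - valueFn P r γ σ)) := by
  have hAv : ∀ {τ : S → A → ℝ}, IsPolicy τ →
      ((1 : Matrix S S ℝ) - γ • PPol P τ) *ᵥ valueFn P r γ τ = rPol r τ := by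
    intro τ hτ
    unfold valueFn
    rw [Matrix.mulVec_mulVec, Matrix.mul_nonsing_inv _ (isUnit_det_aux hγ0 hγ1 hP hτ),
      Matrix.one_mulVec]
  have key : ((1 : Matrix S S ℝ) - γ • PPol P ρ) *ᵥ (valueFn P r γ ρ - valueFn P r γ σ)
      = bellman P r γ ρ (valueFn P r γ σ) - valueFn P r γ σ := by
    rw [Matrix.mulVec_sub, hAv hρ]
    unfold bellman
    rw [Matrix.sub_mulVec, Matrix.one_mulVec, Matrix.smul_mulVec]
    abel
  have h2 : valueFn P r γ ρ - valueFn P r γ σ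
      = ((1 : Matrix S S ℝ) - γ • PPol P ρ)⁻¹ *ᵥ
          (bellman P r γ ρ (valueFn P r γ σ) - valueFn P r γ σ) :=
    (inv_mulVec_eq hγ0 hγ1 hP hρ key).symm
  have hne : (1 : ℝ) - γ ≠ 0 := by linarith
  calc ν ⬝ᵥ valueFn P r γ ρ - ν ⬝ᵥ valueFn P r γ σ
      = ν ⬝ᵥ (valueFn P r γ ρ - valueFn P r γ σ) := (dotProduct_sub _ _ _).symm
    _ = (ν ᵥ* ((1 : Matrix S S ℝ) - γ • PPol P ρ)⁻¹) ⬝ᵥ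
          (bellman P r γ ρ (valueFn P r γ σ) - valueFn P r γ σ) := by
        rw [h2, Matrix.dotProduct_mulVec]
    _ = (1 - γ)⁻¹ *
        (occ P γ ν ρ ⬝ᵥ (bellman P r γ ρ (valueFn P r γ σ) - valueFn P r γ σ)) := by
        unfold occ
        rw [smul_dotProduct]
        simp only [smul_eq_mul]
        field_simp

lemma bellman_mix (α : ℝ) (v : S → ℝ) :
    bellman P r γ (mix α ρ σ) v
      = (1 - α) • bellman P r γ ρ v + α • bellman P r γ σ v := by
  have hr : rPol r (mix α ρ σ) = (1 - α) • rPol r ρ + α • rPol r σ := by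
    funext s
    simp [rPol, mix, add_mul, Finset.sum_add_distrib, Finset.mul_sum, mul_assoc]
  have hB : PPol P (mix α ρ σ) = (1 - α) • PPol P ρ + α • PPol P σ := by
    ext s s'
    simp [PPol, mix, add_mul, Finset.sum_add_distrib, Finset.mul_sum, mul_assoc]
  unfold bellman
  rw [hr, hB, Matrix.add_mulVec, Matrix.smul_mulVec, Matrix.smul_mulVec]
  module

lemma bellman_le_optBellman [Nonempty A] (hP : IsKernel P) (hγ0 : 0 ≤ γ)
    (hσ : IsPolicy σ) (v : S → ℝ) (s : S) :
    bellman P r γ σ v s ≤ optBellman P r γ v s := by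
  have hexpand : bellman P r γ σ v s
      = ∑ a, σ s a * (r s a + γ * ∑ s', P s a s' * v s') := by
    unfold bellman rPol PPol Matrix.mulVec dotProduct
    simp only [Pi.add_apply, Pi.smul_apply, smul_eq_mul, Matrix.of_apply]
    simp only [mul_add, Finset.mul_sum, Finset.sum_mul, Finset.sum_add_distrib]
    congr 1
    rw [Finset.sum_comm]
    exact Finset.sum_congr rfl fun a _ => Finset.sum_congr rfl fun s' _ => by ring
  rw [hexpand]
  calc ∑ a, σ s a * (r s a + γ * ∑ s', P s a s' * v s')
      ≤ ∑ a, σ s a * optBellman P r γ v s := by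
        refine Finset.sum_le_sum fun a _ => mul_le_mul_of_nonneg_left ?_ ((hσ s).1 a)
        exact Finset.le_sup' (fun a => r s a + γ * ∑ s', P s a s' * v s') (Finset.mem_univ a)
    _ = optBellman P r γ v s := by rw [← Finset.sum_mul, (hσ s).2, one_mul]



lemma mix_zero (π ρ' : S → A → ℝ) : mix (0 : ℝ) π ρ' = π := by
  funext s a; simp [mix]

lemma mix_isPolicy {π ρ' : S → A → ℝ} (hπ : IsPolicy π) (hρ' : IsPolicy ρ')
    {α : ℝ} (h0 : 0 ≤ α) (h1 : α ≤ 1) : IsPolicy (mix α π ρ') := by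
  intro s
  constructor
  · intro a
    exact add_nonneg (mul_nonneg (by linarith) ((hπ s).1 a)) (mul_nonneg h0 ((hρ' s).1 a))
  · simp only [mix, Finset.sum_add_distrib, ← Finset.mul_sum, (hπ s).2, (hρ' s).2]
    ring

lemma occ_mix_tendsto (hγ0 : 0 ≤ γ) (hγ1 : γ < 1) (hP : IsKernel P)
    {π : S → A → ℝ} (hπ : IsPolicy π) (ρ' : S → A → ℝ) (ν w : S → ℝ) :
    Tendsto (fun α : ℝ => occ P γ ν (mix α π ρ') ⬝ᵥ w) (𝓝 0)
      (𝓝 (occ P γ ν π ⬝ᵥ w)) := by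
  set F : ℝ → Matrix S S ℝ := fun α => (1 : Matrix S S ℝ) - γ • PPol P (mix α π ρ') with hF
  have hFcont : Continuous F := by
    apply continuous_matrix
    intro i j
    simp only [hF, Matrix.sub_apply, Matrix.smul_apply, Matrix.one_apply, smul_eq_mul,
      PPol, Matrix.of_apply, mix]
    refine continuous_const.sub (continuous_const.mul (continuous_finset_sum _ fun a _ => ?_))
    exact (((continuous_const.sub continuous_id).mul continuous_const).add
      (continuous_id.mul continuous_const)).mul continuous_const
  have hF0 : F 0 = (1 : Matrix S S ℝ) - γ • PPol P π := by rw [hF]; simp [mix_zero]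
  have hdet0 : (F 0).det ≠ 0 := by
    rw [hF0]
    exact (isUnit_det_aux hγ0 hγ1 hP hπ).ne_zero
  have hinvcont : ContinuousAt (fun α => (F α)⁻¹) 0 := by
    have h1 : ContinuousAt (fun α => (F α).det) 0 := (hFcont.matrix_det).continuousAt
    have h2 : ContinuousAt (fun α => Ring.inverse (F α).det) 0 := by
      simp only [Ring.inverse_eq_inv]
      exact h1.inv₀ hdet0
    have h3 : ContinuousAt (fun α => (F α).adjugate) 0 := (hFcont.matrix_adjugate).continuousAt
    have h4 := h2.smul h3
    convert h4 using 1
    funext α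
    exact Matrix.inv_def _
  have hg : Continuous fun M : Matrix S S ℝ => ((1 - γ) • (ν ᵥ* M)) ⬝ᵥ w := by
    show Continuous fun M : Matrix S S ℝ => ∑ s, ((1 - γ) * (∑ t, ν t * M t s)) * w s
    apply continuous_finset_sum
    intro s _
    refine Continuous.mul (Continuous.mul continuous_const ?_) continuous_const
    exact continuous_finset_sum _ fun t _ =>
      continuous_const.mul ((continuous_apply s).comp (continuous_apply t))
  have hcomp : ContinuousAt (fun α => ((1 - γ) • (ν ᵥ* (F α)⁻¹)) ⬝ᵥ w) 0 :=
    hg.continuousAt.comp hinvcont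
  have heq : (fun α : ℝ => occ P γ ν (mix α π ρ') ⬝ᵥ w)
      = fun α => ((1 - γ) • (ν ᵥ* (F α)⁻¹)) ⬝ᵥ w := rfl
  have hval : occ P γ ν π ⬝ᵥ w = ((1 - γ) • (ν ᵥ* (F 0)⁻¹)) ⬝ᵥ w := by
    rw [hF0]; rfl
  rw [heq, hval]
  exact hcomp.tendsto

lemma diff_quot_tendsto (hγ0 : 0 ≤ γ) (hγ1 : γ < 1) (hP : IsKernel P)
    {π ρ' : S → A → ℝ} (hπ : IsPolicy π) (hρ' : IsPolicy ρ') (ν : S → ℝ) :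
    Tendsto (fun α : ℝ =>
        (ν ⬝ᵥ valueFn P r γ (mix α π ρ') - ν ⬝ᵥ valueFn P r γ π) / α)
      (𝓝[>] (0 : ℝ))
      (𝓝 ((1 - γ)⁻¹ *
        (occ P γ ν π ⬝ᵥ (bellman P r γ ρ' (valueFn P r γ π) - valueFn P r γ π)))) := by
  set v := valueFn P r γ π with hv
  set w := bellman P r γ ρ' v - v with hw
  have hkey : ∀ α ∈ Set.Ioc (0 : ℝ) 1,
      (ν ⬝ᵥ valueFn P r γ (mix α π ρ') - ν ⬝ᵥ valueFn P r γ π) / α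
        = (1 - γ)⁻¹ * (occ P γ ν (mix α π ρ') ⬝ᵥ w) := by
    intro α hα
    have hmix : IsPolicy (mix α π ρ') := mix_isPolicy hπ hρ' (le_of_lt hα.1) hα.2
    have hbm : bellman P r γ (mix α π ρ') v - v = α • w := by
      rw [bellman_mix, hw, bellman_valueFn hγ0 hγ1 hP hπ, ← hv]
      module
    rw [perf_diff hγ0 hγ1 hP hmix hπ ν, ← hv, hbm, dotProduct_smul]
    have hαne : α ≠ 0 := ne_of_gt hα.1
    simp only [smul_eq_mul]
    rw [mul_div_assoc, mul_div_cancel_left₀ _ hαne]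
  have hlim : Tendsto (fun α : ℝ => (1 - γ)⁻¹ * (occ P γ ν (mix α π ρ') ⬝ᵥ w))
      (𝓝[>] (0 : ℝ)) (𝓝 ((1 - γ)⁻¹ * (occ P γ ν π ⬝ᵥ w))) := by
    exact (((occ_mix_tendsto hγ0 hγ1 hP hπ ρ' ν w).const_mul
      ((1 - γ)⁻¹)).mono_left nhdsWithin_le_nhds)
  refine hlim.congr' ?_ |>.mono_left (le_refl _)
  filter_upwards [Ioc_mem_nhdsGT (zero_lt_one)] with α hα
  exact (hkey α hα).symm



lemma rPol_abs_le {R : ℝ} (hr : ∀ s a, |r s a| ≤ R) (hρ : IsPolicy ρ) (s : S) :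
    |rPol r ρ s| ≤ R := by
  calc |rPol r ρ s| ≤ ∑ a, |ρ s a * r s a| := Finset.abs_sum_le_sum_abs _ _
    _ ≤ ∑ a, ρ s a * R := Finset.sum_le_sum fun a _ => by
        rw [abs_mul, abs_of_nonneg ((hρ s).1 a)]
        exact mul_le_mul_of_nonneg_left (hr s a) ((hρ s).1 a)
    _ = R := by rw [← Finset.sum_mul, (hρ s).2, one_mul]

lemma valueFn_abs_le (hγ0 : 0 ≤ γ) (hγ1 : γ < 1) (hP : IsKernel P) (hρ : IsPolicy ρ)
    {R : ℝ} (hr : ∀ s a, |r s a| ≤ R) (s : S) :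
    |valueFn P r γ ρ s| ≤ (1 - γ)⁻¹ * R := by
  show |(((1 : Matrix S S ℝ) - γ • PPol P ρ)⁻¹ *ᵥ rPol r ρ) s| ≤ (1 - γ)⁻¹ * R
  calc |(((1 : Matrix S S ℝ) - γ • PPol P ρ)⁻¹ *ᵥ rPol r ρ) s|
      ≤ ∑ t, |((1 : Matrix S S ℝ) - γ • PPol P ρ)⁻¹ s t * rPol r ρ t| :=
        Finset.abs_sum_le_sum_abs _ _
    _ ≤ ∑ t, ((1 : Matrix S S ℝ) - γ • PPol P ρ)⁻¹ s t * R :=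
        Finset.sum_le_sum fun t _ => by
          rw [abs_mul, abs_of_nonneg (inv_entry_nonneg hγ0 hγ1 hP hρ s t)]
          exact mul_le_mul_of_nonneg_left (rPol_abs_le hr hρ t)
            (inv_entry_nonneg hγ0 hγ1 hP hρ s t)
    _ = (1 - γ)⁻¹ * R := by rw [← Finset.sum_mul, inv_rowsum hγ0 hγ1 hP hρ]

lemma kernel_dot_abs_le (hP : IsKernel P) {v : S → ℝ} {V : ℝ} (hv : ∀ t, |v t| ≤ V)
    (s : S) (a : A) : |∑ s', P s a s' * v s'| ≤ V := by
  calc |∑ s', P s a s' * v s'| ≤ ∑ s', |P s a s' * v s'| := Finset.abs_sum_le_sum_abs _ _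
    _ ≤ ∑ s', P s a s' * V := Finset.sum_le_sum fun s' _ => by
        rw [abs_mul, abs_of_nonneg ((hP s a).1 s')]
        exact mul_le_mul_of_nonneg_left (hv s') ((hP s a).1 s')
    _ = V := by rw [← Finset.sum_mul, (hP s a).2, one_mul]

lemma PPol_mulVec_abs_le (hP : IsKernel P) (hσ : IsPolicy σ) {v : S → ℝ} {V : ℝ}
    (hv : ∀ t, |v t| ≤ V) (s : S) : |((PPol P σ) *ᵥ v) s| ≤ V := by
  show |∑ s', PPol P σ s s' * v s'| ≤ V
  calc |∑ s', PPol P σ s s' * v s'| ≤ ∑ s', |PPol P σ s s' * v s'| :=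
        Finset.abs_sum_le_sum_abs _ _
    _ ≤ ∑ s', PPol P σ s s' * V := Finset.sum_le_sum fun s' _ => by
        rw [abs_mul, abs_of_nonneg (PPol_nonneg hP hσ s s')]
        exact mul_le_mul_of_nonneg_left (hv s') (PPol_nonneg hP hσ s s')
    _ = V := by rw [← Finset.sum_mul, PPol_rowsum hP hσ, one_mul]

lemma bellman_abs_le (hγ0 : 0 ≤ γ) (hP : IsKernel P) (hσ : IsPolicy σ)
    {R V : ℝ} {v : S → ℝ} (hr : ∀ s a, |r s a| ≤ R) (hv : ∀ t, |v t| ≤ V) (s : S) :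
    |bellman P r γ σ v s| ≤ R + γ * V := by
  have h1 : bellman P r γ σ v s = rPol r σ s + γ * ((PPol P σ) *ᵥ v) s := rfl
  rw [h1]
  calc |rPol r σ s + γ * ((PPol P σ) *ᵥ v) s|
      ≤ |rPol r σ s| + |γ * ((PPol P σ) *ᵥ v) s| := abs_add_le _ _
    _ ≤ R + γ * V := by
        refine add_le_add (rPol_abs_le hr hσ s) ?_
        rw [abs_mul, abs_of_nonneg hγ0]
        exact mul_le_mul_of_nonneg_left (PPol_mulVec_abs_le hP hσ hv s) hγ0

lemma optBellman_abs_le (hγ0 : 0 ≤ γ) (hP : IsKernel P)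
    {R V : ℝ} {v : S → ℝ} (hr : ∀ s a, |r s a| ≤ R) (hv : ∀ t, |v t| ≤ V) (s : S) :
    |optBellman P r γ v s| ≤ R + γ * V := by
  rw [abs_le]
  constructor
  · obtain ⟨a0⟩ := (inferInstance : Nonempty A)
    have hle : r s a0 + γ * ∑ s', P s a0 s' * v s' ≤ optBellman P r γ v s :=
      Finset.le_sup' (fun a => r s a + γ * ∑ s', P s a s' * v s') (Finset.mem_univ a0)
    have h1 : -(R + γ * V) ≤ r s a0 + γ * ∑ s', P s a0 s' * v s' := by
      have h2 := abs_le.mp (hr s a0)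
      have h3 := abs_le.mp (kernel_dot_abs_le hP hv s a0)
      nlinarith
    linarith
  · refine Finset.sup'_le _ _ fun a _ => ?_
    have h2 := abs_le.mp (hr s a)
    have h3 := abs_le.mp (kernel_dot_abs_le hP hv s a)
    nlinarith

lemma F_abs_le (hγ0 : 0 ≤ γ) (hγ1 : γ < 1) (hP : IsKernel P)
    (hρ : IsPolicy ρ) (hρ' : IsPolicy σ) {ν : S → ℝ} (hν : IsDist ν)
    {R : ℝ} (hr : ∀ s a, |r s a| ≤ R) :
    |occ P γ ν ρ ⬝ᵥ
        (optBellman P r γ (valueFn P r γ ρ) - bellman P r γ σ (valueFn P r γ ρ))|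
      ≤ 2 * (R + γ * ((1 - γ)⁻¹ * R)) := by
  set K0 := R + γ * ((1 - γ)⁻¹ * R) with hK0
  have hv : ∀ t, |valueFn P r γ ρ t| ≤ (1 - γ)⁻¹ * R :=
    fun t => valueFn_abs_le hγ0 hγ1 hP hρ hr t
  have hw : ∀ s, |(optBellman P r γ (valueFn P r γ ρ)
      - bellman P r γ σ (valueFn P r γ ρ)) s| ≤ 2 * K0 := by
    intro s
    simp only [Pi.sub_apply]
    calc |optBellman P r γ (valueFn P r γ ρ) s - bellman P r γ σ (valueFn P r γ ρ) s|
        ≤ |optBellman P r γ (valueFn P r γ ρ) s| + |bellman P r γ σ (valueFn P r γ ρ) s| :=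
          abs_sub _ _
      _ ≤ K0 + K0 :=
          add_le_add (optBellman_abs_le hγ0 hP hr hv s) (bellman_abs_le hγ0 hP hρ' hr hv s)
      _ = 2 * K0 := by ring
  show |∑ s, occ P γ ν ρ s * _| ≤ 2 * K0
  calc |∑ s, occ P γ ν ρ s *
        (optBellman P r γ (valueFn P r γ ρ) - bellman P r γ σ (valueFn P r γ ρ)) s|
      ≤ ∑ s, |occ P γ ν ρ s *
        (optBellman P r γ (valueFn P r γ ρ) - bellman P r γ σ (valueFn P r γ ρ)) s| :=
        Finset.abs_sum_le_sum_abs _ _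
    _ ≤ ∑ s, occ P γ ν ρ s * (2 * K0) := Finset.sum_le_sum fun s _ => by
        rw [abs_mul, abs_of_nonneg (occ_nonneg hγ0 hγ1 hP hρ hν.1 s)]
        exact mul_le_mul_of_nonneg_left (hw s) (occ_nonneg hγ0 hγ1 hP hρ hν.1 s)
    _ = 2 * K0 := by rw [← Finset.sum_mul, occ_sum hγ0 hγ1 hP hρ hν, one_mul]

end AuxProof

/-- if the convex `Π` contains all deterministic policies and `π ∈ Π` is an
`ε`-local optimum of `J_ν`, then for EVERY policy `π'` and distribution `μ`,
`μ·v_{π'} ≤ μ·v_π + (1-γ)⁻¹ ‖d_{μ,π'}/ν‖_∞ (E_ν(Π)/(1-γ) + ε)`. -/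
theorem stmt_17 {S A : Type*} [Fintype S] [Fintype A] [Nonempty S] [Nonempty A]
    [DecidableEq S] [DecidableEq A]
    (P : S → A → S → ℝ) (hP : IsKernel P) (r : S → A → ℝ) (γ : ℝ)
    (hγ0 : 0 ≤ γ) (hγ1 : γ < 1)
    (Pol : Set (S → A → ℝ)) (hPol : ∀ ρ ∈ Pol, IsPolicy ρ)
    (hconv : ∀ ρ ∈ Pol, ∀ ρ' ∈ Pol, ∀ α : ℝ, 0 ≤ α → α ≤ 1 → mix α ρ ρ' ∈ Pol)
    (hdet : ∀ f : S → A, (fun s a => if a = f s then (1 : ℝ) else 0) ∈ Pol)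
    (ν : S → ℝ) (hν : IsDist ν) (ε : ℝ) (hε : 0 ≤ ε)
    (π : S → A → ℝ) (hπ : π ∈ Pol)
    (hloc : IsLocalOpt P r γ ν Pol π ε)
    (π' : S → A → ℝ) (hπ' : IsPolicy π') (μ : S → ℝ) (hμ : IsDist μ)
    (C : ℝ) (hC : IsLeast {c : ℝ | ∀ s, occ P γ μ π' s ≤ c * ν s} C) :
    μ ⬝ᵥ valueFn P r γ π' ≤ μ ⬝ᵥ valueFn P r γ π
      + (1 - γ)⁻¹ * C * (greedyCplx P r γ ν Pol / (1 - γ) + ε) := by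
  have hγpos : (0 : ℝ) < 1 - γ := by linarith
  have hγne : (1 : ℝ) - γ ≠ 0 := ne_of_gt hγpos
  have hπpol : IsPolicy π := hPol π hπ
  set v := valueFn P r γ π with hv
  set Δ := optBellman P r γ v - v with hΔ
  have hbvf : bellman P r γ π v = v := bellman_valueFn hγ0 hγ1 hP hπpol
  have hΔnonneg : ∀ s, 0 ≤ Δ s := by
    intro s
    have h1 : bellman P r γ π v s ≤ optBellman P r γ v s :=
      bellman_le_optBellman hP hγ0 hπpol v s
    rw [hbvf] at h1
    simp only [hΔ, Pi.sub_apply]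
    linarith
  -- local optimality bound
  have hlocbd : ∀ ρ' ∈ Pol, occ P γ ν π ⬝ᵥ (bellman P r γ ρ' v - v) ≤ (1 - γ) * ε := by
    intro ρ' hρ'
    obtain ⟨L, hLε, hL⟩ := hloc ρ' hρ'
    have h2 := diff_quot_tendsto (r := r) hγ0 hγ1 hP hπpol (hPol ρ' hρ') ν
    have hEq : (1 - γ)⁻¹ * (occ P γ ν π ⬝ᵥ (bellman P r γ ρ' v - v)) = L :=
      tendsto_nhds_unique h2 hL
    have hle : (1 - γ)⁻¹ * (occ P γ ν π ⬝ᵥ (bellman P r γ ρ' v - v)) ≤ ε := by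
      rw [hEq]; exact hLε
    calc occ P γ ν π ⬝ᵥ (bellman P r γ ρ' v - v)
        = (1 - γ) * ((1 - γ)⁻¹ * (occ P γ ν π ⬝ᵥ (bellman P r γ ρ' v - v))) := by
          field_simp
      _ ≤ (1 - γ) * ε := mul_le_mul_of_nonneg_left hle (le_of_lt hγpos)
  -- bound constant
  set R := Finset.univ.sup' Finset.univ_nonempty (fun sa : S × A => |r sa.1 sa.2|) with hR
  have hr : ∀ s a, |r s a| ≤ R := fun s a =>
    Finset.le_sup' (fun sa : S × A => |r sa.1 sa.2|) (Finset.mem_univ (s, a))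
  set K := 2 * (R + γ * ((1 - γ)⁻¹ * R)) with hK
  haveI : Nonempty Pol := ⟨⟨π, hπ⟩⟩
  have hFbd : ∀ ρ ρ' : Pol, |occ P γ ν (ρ : S → A → ℝ) ⬝ᵥ
      (optBellman P r γ (valueFn P r γ (ρ : S → A → ℝ)) -
        bellman P r γ (ρ' : S → A → ℝ) (valueFn P r γ (ρ : S → A → ℝ)))| ≤ K :=
    fun ρ ρ' => F_abs_le hγ0 hγ1 hP (hPol _ ρ.2) (hPol _ ρ'.2) hν hr
  -- key greedy step
  have hstep : occ P γ ν π ⬝ᵥ Δ - (1 - γ) * ε ≤ greedyCplx P r γ ν Pol := by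
    have hlow : ∀ ρ' : Pol, occ P γ ν π ⬝ᵥ Δ - (1 - γ) * ε
        ≤ occ P γ ν π ⬝ᵥ (optBellman P r γ v - bellman P r γ (ρ' : S → A → ℝ) v) := by
      intro ρ'
      have h1 := hlocbd ρ' ρ'.2
      have hsplit : occ P γ ν π ⬝ᵥ (optBellman P r γ v - bellman P r γ (ρ' : S → A → ℝ) v)
          = occ P γ ν π ⬝ᵥ Δ
            - occ P γ ν π ⬝ᵥ (bellman P r γ (ρ' : S → A → ℝ) v - v) := by
        rw [← dotProduct_sub]
        congr 1
        simp only [hΔ]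
        abel
      rw [hsplit]
      linarith
    have hinf : occ P γ ν π ⬝ᵥ Δ - (1 - γ) * ε
        ≤ ⨅ ρ' : Pol, occ P γ ν π ⬝ᵥ
            (optBellman P r γ v - bellman P r γ (ρ' : S → A → ℝ) v) := le_ciInf hlow
    have hπmem : (⟨π, hπ⟩ : Pol) = (⟨π, hπ⟩ : Pol) := rfl
    have hsup : (⨅ ρ' : Pol, occ P γ ν π ⬝ᵥ
          (optBellman P r γ v - bellman P r γ (ρ' : S → A → ℝ) v))
        ≤ greedyCplx P r γ ν Pol := by
      unfold greedyCplx
      refine le_trans (le_of_eq ?_) (le_ciSup ?_ (⟨π, hπ⟩ : Pol))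
      · rfl
      · refine ⟨K, ?_⟩
        rintro x ⟨ρ, rfl⟩
        calc (⨅ ρ' : Pol, occ P γ ν (ρ : S → A → ℝ) ⬝ᵥ
              (optBellman P r γ (valueFn P r γ (ρ : S → A → ℝ)) -
                bellman P r γ (ρ' : S → A → ℝ) (valueFn P r γ (ρ : S → A → ℝ))))
            ≤ occ P γ ν (ρ : S → A → ℝ) ⬝ᵥ
              (optBellman P r γ (valueFn P r γ (ρ : S → A → ℝ)) -
                bellman P r γ π (valueFn P r γ (ρ : S → A → ℝ))) := by
              refine ciInf_le ⟨-K, ?_⟩ (⟨π, hπ⟩ : Pol)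
              rintro y ⟨ρ', rfl⟩
              have := abs_le.mp (hFbd ρ ρ')
              linarith [this.1]
          _ ≤ K := (abs_le.mp (hFbd ρ ⟨π, hπ⟩)).2
    exact le_trans hinf hsup
  -- main chain
  have h1 : μ ⬝ᵥ valueFn P r γ π' - μ ⬝ᵥ v
      = (1 - γ)⁻¹ * (occ P γ μ π' ⬝ᵥ (bellman P r γ π' v - v)) :=
    perf_diff hγ0 hγ1 hP hπ' hπpol μ
  have h2 : occ P γ μ π' ⬝ᵥ (bellman P r γ π' v - v) ≤ occ P γ μ π' ⬝ᵥ Δ := by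
    show ∑ s, occ P γ μ π' s * _ ≤ ∑ s, occ P γ μ π' s * _
    refine Finset.sum_le_sum fun s _ => ?_
    refine mul_le_mul_of_nonneg_left ?_ (occ_nonneg hγ0 hγ1 hP hπ' hμ.1 s)
    simp only [hΔ, Pi.sub_apply]
    exact sub_le_sub_right (bellman_le_optBellman hP hγ0 hπ' v s) _
  have hC0 : 0 ≤ C := by
    have hνpos : ∃ s, 0 < ν s := by
      by_contra h
      push_neg at h
      have hsum : ∑ s, ν s ≤ 0 := Finset.sum_nonpos fun s _ => h s
      rw [hν.2] at hsum
      linarith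
    obtain ⟨s0, hs0⟩ := hνpos
    have hle := hC.1 s0
    have honn := occ_nonneg hγ0 hγ1 hP hπ' hμ.1 s0
    nlinarith
  have h3 : occ P γ μ π' ⬝ᵥ Δ ≤ C * (ν ⬝ᵥ Δ) := by
    have : C * (ν ⬝ᵥ Δ) = ∑ s, (C * ν s) * Δ s := by
      show C * ∑ s, ν s * Δ s = _
      rw [Finset.mul_sum]
      exact Finset.sum_congr rfl fun s _ => by ring
    rw [this]
    refine Finset.sum_le_sum fun s _ => ?_
    exact mul_le_mul_of_nonneg_right (hC.1 s) (hΔnonneg s)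
  have h4 : ν ⬝ᵥ Δ ≤ (1 - γ)⁻¹ * (occ P γ ν π ⬝ᵥ Δ) := by
    have : (1 - γ)⁻¹ * (occ P γ ν π ⬝ᵥ Δ) = ∑ s, ((1 - γ)⁻¹ * occ P γ ν π s) * Δ s := by
      show (1 - γ)⁻¹ * ∑ s, occ P γ ν π s * Δ s = _
      rw [Finset.mul_sum]
      exact Finset.sum_congr rfl fun s _ => by ring
    rw [this]
    refine Finset.sum_le_sum fun s _ => ?_
    refine mul_le_mul_of_nonneg_right ?_ (hΔnonneg s)
    have hocc := occ_ge hγ0 hγ1 hP hπpol hν.1 s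
    rw [le_inv_mul_iff₀ hγpos]
    linarith
  have h5 : occ P γ ν π ⬝ᵥ Δ ≤ greedyCplx P r γ ν Pol + (1 - γ) * ε := by linarith
  -- combine
  have hchain : occ P γ μ π' ⬝ᵥ (bellman P r γ π' v - v)
      ≤ C * ((1 - γ)⁻¹ * (greedyCplx P r γ ν Pol + (1 - γ) * ε)) := by
    calc occ P γ μ π' ⬝ᵥ (bellman P r γ π' v - v) ≤ occ P γ μ π' ⬝ᵥ Δ := h2
      _ ≤ C * (ν ⬝ᵥ Δ) := h3
      _ ≤ C * ((1 - γ)⁻¹ * (occ P γ ν π ⬝ᵥ Δ)) := mul_le_mul_of_nonneg_left h4 hC0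
      _ ≤ C * ((1 - γ)⁻¹ * (greedyCplx P r γ ν Pol + (1 - γ) * ε)) := by
          refine mul_le_mul_of_nonneg_left ?_ hC0
          exact mul_le_mul_of_nonneg_left h5 (le_of_lt (inv_pos.mpr hγpos))
  have hfinal : μ ⬝ᵥ valueFn P r γ π' - μ ⬝ᵥ v
      ≤ (1 - γ)⁻¹ * (C * ((1 - γ)⁻¹ * (greedyCplx P r γ ν Pol + (1 - γ) * ε))) := by
    rw [h1]
    exact mul_le_mul_of_nonneg_left hchain (le_of_lt (inv_pos.mpr hγpos))
  have hrw : (1 - γ)⁻¹ * (C * ((1 - γ)⁻¹ * (greedyCplx P r γ ν Pol + (1 - γ) * ε)))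
      = (1 - γ)⁻¹ * C * (greedyCplx P r γ ν Pol / (1 - γ) + ε) := by
    have h6 : (1 - γ)⁻¹ * ((1 - γ) * ε) = ε := by
      rw [← mul_assoc, inv_mul_cancel₀ hγne, one_mul]
    calc (1 - γ)⁻¹ * (C * ((1 - γ)⁻¹ * (greedyCplx P r γ ν Pol + (1 - γ) * ε)))
        = (1 - γ)⁻¹ * C *
            ((1 - γ)⁻¹ * greedyCplx P r γ ν Pol + (1 - γ)⁻¹ * ((1 - γ) * ε)) := by ring
      _ = (1 - γ)⁻¹ * C * (greedyCplx P r γ ν Pol / (1 - γ) + ε) := by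
          rw [h6, div_eq_mul_inv, mul_comm (greedyCplx P r γ ν Pol)]
  linarith [hfinal, hrw ▸ hfinal]
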